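/- Let (Z, d_Z) be a bounded metric space. Then ρ_Z((z,h),(z',h')) := 2·log((d_Z(z,z') + max(h,h'))/√(h·h')) defines a metric on Z × (0, diam Z]. -/
import Mathlib


/-- The Bonk–Schramm hyperbolic filling distance on `Z × (0, diam Z]`. -/
noncomputable def hypDist {Z : Type*} [PseudoMetricSpace Z] (p q : Z × ℝ) : ℝ :=
  2 * Real.log ((dist p.1 q.1 + max p.2 q.2) / Real.sqrt (p.2 * q.2))

private lemma sqrt_le_max {a b : ℝ} (ha : 0 ≤ a) (hb : 0 ≤ b) :
    Real.sqrt (a * b) ≤ max a b := by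
  have h1 : a * b ≤ max a b * max a b :=
    mul_le_mul (le_max_left a b) (le_max_right a b) hb (le_trans ha (le_max_left a b))
  calc Real.sqrt (a * b) ≤ Real.sqrt (max a b * max a b) := Real.sqrt_le_sqrt h1
    _ = max a b := Real.sqrt_mul_self (le_trans ha (le_max_left a b))

private lemma key_ineq {d12 d23 d13 h1 h2 h3 : ℝ} (hd12 : 0 ≤ d12) (hd23 : 0 ≤ d23)
    (htri : d13 ≤ d12 + d23) (h2p : 0 < h2) :
    (d13 + max h1 h3) * h2 ≤ (d12 + max h1 h2) * (d23 + max h2 h3) := by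
  rcases max_cases h1 h3 with ⟨he, _⟩ | ⟨he, _⟩ <;> rw [he] <;>
    nlinarith [le_max_left h1 h2, le_max_right h1 h2, le_max_left h2 h3, le_max_right h2 h3,
      mul_nonneg hd12 hd23]

/-- For a bounded metric space `Z`, `ρ_Z((z,h),(z',h')) = 2 log((d(z,z') + h∨h')/√(hh'))`
is a metric on `Z × (0, diam Z]`. -/
theorem stmt_11 {Z : Type*} [MetricSpace Z] [Nonempty Z]
    (hbd : Bornology.IsBounded (Set.univ : Set Z))
    (hΔ : 0 < Metric.diam (Set.univ : Set Z)) :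
    (∀ p q : Z × ℝ, p.2 ∈ Set.Ioc 0 (Metric.diam (Set.univ : Set Z)) →
      q.2 ∈ Set.Ioc 0 (Metric.diam (Set.univ : Set Z)) → hypDist p q = hypDist q p) ∧
    (∀ p q : Z × ℝ, p.2 ∈ Set.Ioc 0 (Metric.diam (Set.univ : Set Z)) →
      q.2 ∈ Set.Ioc 0 (Metric.diam (Set.univ : Set Z)) → 0 ≤ hypDist p q) ∧
    (∀ p q : Z × ℝ, p.2 ∈ Set.Ioc 0 (Metric.diam (Set.univ : Set Z)) →
      q.2 ∈ Set.Ioc 0 (Metric.diam (Set.univ : Set Z)) → (hypDist p q = 0 ↔ p = q)) ∧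
    (∀ p q r : Z × ℝ, p.2 ∈ Set.Ioc 0 (Metric.diam (Set.univ : Set Z)) →
      q.2 ∈ Set.Ioc 0 (Metric.diam (Set.univ : Set Z)) →
      r.2 ∈ Set.Ioc 0 (Metric.diam (Set.univ : Set Z)) →
      hypDist p r ≤ hypDist p q + hypDist q r) := by
  refine ⟨?_, ?_, ?_, ?_⟩
  · intro p q _ _
    simp [hypDist, dist_comm, max_comm, mul_comm]
  · intro p q hp hq
    have hs : 0 < Real.sqrt (p.2 * q.2) := Real.sqrt_pos.mpr (mul_pos hp.1 hq.1)
    have hm := sqrt_le_max hp.1.le hq.1.le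
    have h1 : (1 : ℝ) ≤ (dist p.1 q.1 + max p.2 q.2) / Real.sqrt (p.2 * q.2) := by
      rw [le_div_iff₀ hs, one_mul]
      linarith [dist_nonneg (x := p.1) (y := q.1)]
    have := Real.log_nonneg h1
    unfold hypDist; linarith
  · intro p q hp hq
    have hs : 0 < Real.sqrt (p.2 * q.2) := Real.sqrt_pos.mpr (mul_pos hp.1 hq.1)
    have hm := sqrt_le_max hp.1.le hq.1.le
    constructor
    · intro h0
      have hlog : Real.log ((dist p.1 q.1 + max p.2 q.2) / Real.sqrt (p.2 * q.2)) = 0 := by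
        unfold hypDist at h0; linarith
      have hx1 : (dist p.1 q.1 + max p.2 q.2) / Real.sqrt (p.2 * q.2) = 1 := by
        rcases Real.log_eq_zero.mp hlog with h | h | h
        · exfalso
          have : 0 < (dist p.1 q.1 + max p.2 q.2) / Real.sqrt (p.2 * q.2) := by
            apply div_pos _ hs
            linarith [dist_nonneg (x := p.1) (y := q.1)]
          linarith
        · exact h
        · exfalso
          have : 0 < (dist p.1 q.1 + max p.2 q.2) / Real.sqrt (p.2 * q.2) := by
            apply div_pos _ hs
            linarith [dist_nonneg (x := p.1) (y := q.1)]
          linarith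
      have heq : dist p.1 q.1 + max p.2 q.2 = Real.sqrt (p.2 * q.2) := by
        field_simp at hx1; linarith
      have hd0 : dist p.1 q.1 = 0 := le_antisymm (by linarith) dist_nonneg
      have hmeq : max p.2 q.2 = Real.sqrt (p.2 * q.2) := by linarith
      have h22 : p.2 = q.2 := by
        have hsq : max p.2 q.2 * max p.2 q.2 = p.2 * q.2 := by
          rw [hmeq, Real.mul_self_sqrt (mul_pos hp.1 hq.1).le]
        rcases max_cases p.2 q.2 with ⟨he, hle⟩ | ⟨he, hlt⟩
        · rw [he] at hsq; exact mul_left_cancel₀ (ne_of_gt hp.1) hsq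
        · rw [he] at hsq
          have := mul_right_cancel₀ (ne_of_gt hq.1) hsq
          linarith
      exact Prod.ext (dist_eq_zero.mp hd0) h22
    · rintro rfl
      simp [hypDist, Real.sqrt_mul_self hp.1.le, div_self (ne_of_gt hp.1)]
  · intro p q r hp hq hr
    set h1 := p.2; set h2 := q.2; set h3 := r.2
    have h1p : 0 < h1 := hp.1
    have h2p : 0 < h2 := hq.1
    have h3p : 0 < h3 := hr.1
    have s13 : 0 < Real.sqrt (h1 * h3) := Real.sqrt_pos.mpr (mul_pos h1p h3p)
    have s12 : 0 < Real.sqrt (h1 * h2) := Real.sqrt_pos.mpr (mul_pos h1p h2p)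
    have s23 : 0 < Real.sqrt (h2 * h3) := Real.sqrt_pos.mpr (mul_pos h2p h3p)
    have N13 : 0 < dist p.1 r.1 + max h1 h3 := by
      linarith [dist_nonneg (x := p.1) (y := r.1), lt_of_lt_of_le h1p (le_max_left h1 h3)]
    have N12 : 0 < dist p.1 q.1 + max h1 h2 := by
      linarith [dist_nonneg (x := p.1) (y := q.1), lt_of_lt_of_le h1p (le_max_left h1 h2)]
    have N23 : 0 < dist q.1 r.1 + max h2 h3 := by
      linarith [dist_nonneg (x := q.1) (y := r.1), lt_of_lt_of_le h2p (le_max_left h2 h3)]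
    have hss : Real.sqrt (h1 * h2) * Real.sqrt (h2 * h3) = h2 * Real.sqrt (h1 * h3) := by
      rw [← Real.sqrt_mul (mul_pos h1p h2p).le,
        show h1 * h2 * (h2 * h3) = h2 ^ 2 * (h1 * h3) by ring,
        Real.sqrt_mul (sq_nonneg h2), Real.sqrt_sq h2p.le]
    have hdiv : (dist p.1 r.1 + max h1 h3) / Real.sqrt (h1 * h3) ≤
        ((dist p.1 q.1 + max h1 h2) / Real.sqrt (h1 * h2)) *
        ((dist q.1 r.1 + max h2 h3) / Real.sqrt (h2 * h3)) := by
      rw [div_mul_div_comm, div_le_div_iff₀ s13 (mul_pos s12 s23), hss]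
      calc (dist p.1 r.1 + max h1 h3) * (h2 * Real.sqrt (h1 * h3))
          = ((dist p.1 r.1 + max h1 h3) * h2) * Real.sqrt (h1 * h3) := by ring
        _ ≤ ((dist p.1 q.1 + max h1 h2) * (dist q.1 r.1 + max h2 h3)) * Real.sqrt (h1 * h3) := by
            apply mul_le_mul_of_nonneg_right _ s13.le
            exact key_ineq dist_nonneg dist_nonneg (dist_triangle p.1 q.1 r.1) h2p
        _ = (dist p.1 q.1 + max h1 h2) * (dist q.1 r.1 + max h2 h3) * Real.sqrt (h1 * h3) := rfl
    have hlog := Real.log_le_log (div_pos N13 s13) hdiv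
    rw [Real.log_mul (ne_of_gt (div_pos N12 s12)) (ne_of_gt (div_pos N23 s23))] at hlog
    unfold hypDist
    linarith
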